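/- Every submodule I of R[x₁,…,x_n]^k, where R is a Euclidean domain, has a finite strong Gröbner basis with respect to any given admissible order on the monomial vectors. -/

import Mathlib

open MvPolynomial

/-- Polynomial vectors: `R[x₁,…,x_n]^k`. -/
abbrev PolyVec (R : Type*) [CommSemiring R] (n k : ℕ) := Fin k → MvPolynomial (Fin n) R

/-- Monomial vectors `x^α e_i`, encoded as pairs `(α, i)`. -/
abbrev MonV (n k : ℕ) := (Fin n →₀ ℕ) × Fin k

/-- An admissible order on monomial vectors. -/
structure AdmissibleOrder (n k : ℕ) where
  le : MonV n k → MonV n k → Prop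
  refl : ∀ a, le a a
  trans : ∀ a b c, le a b → le b c → le a c
  antisymm : ∀ a b, le a b → le b a → a = b
  total : ∀ a b, le a b ∨ le b a
  dvd_le : ∀ (α β : Fin n →₀ ℕ) (i : Fin k), (∀ m, α m ≤ β m) → le (α, i) (β, i)
  add_le : ∀ (α β γ : Fin n →₀ ℕ) (i j : Fin k),
    le (α, i) (β, j) → le (α + γ, i) (β + γ, j)

variable {R : Type*} [CommRing R] {n k : ℕ}

/-- `m` is the leading monomial vector of `f` w.r.t. the admissible order `r`
(so in particular `f ≠ 0`). -/
def IsDeg (r : AdmissibleOrder n k) (f : PolyVec R n k) (m : MonV n k) : Prop :=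
  (f m.2).coeff m.1 ≠ 0 ∧ ∀ m' : MonV n k, (f m'.2).coeff m'.1 ≠ 0 → r.le m' m

/-- The leading term vector of `g` divides the leading term vector of `f`:
same position, componentwise smaller exponent, and the leading coefficient of `g`
divides that of `f` in `R`. -/
def LtDvd (r : AdmissibleOrder n k) (g f : PolyVec R n k) : Prop :=
  ∃ mg mf : MonV n k, IsDeg r g mg ∧ IsDeg r f mf ∧ mg.2 = mf.2 ∧
    (∀ m, mg.1 m ≤ mf.1 m) ∧ (g mg.2).coeff mg.1 ∣ (f mf.2).coeff mf.1

/-- `G` is a strong Gröbner basis of the submodule `I` w.r.t. `r`. -/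
def IsSGB (r : AdmissibleOrder n k) (G : Set (PolyVec R n k))
    (I : Submodule (MvPolynomial (Fin n) R) (PolyVec R n k)) : Prop :=
  (∀ g ∈ G, g ∈ I ∧ g ≠ 0) ∧
  ∀ f ∈ I, f ≠ 0 → ∃ g ∈ G, LtDvd r g f

/-- Multiplication of a polynomial vector by the term `a·x^m`. -/
noncomputable def termSMul (m : Fin n →₀ ℕ) (a : R) (g : PolyVec R n k) : PolyVec R n k :=
  fun j => MvPolynomial.monomial m a * g j

/-- `f` has a strong standard representation by `G`: `f = Σ aᵢ mᵢ gᵢ` with `gᵢ ∈ G`,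
`Lm(m₁g₁) = Lm(f)` and `Lm(mᵢgᵢ) < Lm(f)` for `i ≥ 2`. -/
def IsSSR (r : AdmissibleOrder n k) (G : Set (PolyVec R n k)) (f : PolyVec R n k) : Prop :=
  ∃ (N : ℕ) (hN : 0 < N) (a : Fin N → R) (m : Fin N → (Fin n →₀ ℕ))
    (g : Fin N → PolyVec R n k),
    (∀ i, g i ∈ G) ∧
    f = ∑ i, termSMul (m i) (a i) (g i) ∧
    ∃ mf m0 : MonV n k, IsDeg r f mf ∧ IsDeg r (g ⟨0, hN⟩) m0 ∧
      ((m ⟨0, hN⟩ + m0.1, m0.2) : MonV n k) = mf ∧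
      ∀ i : Fin N, i ≠ ⟨0, hN⟩ → ∃ mi : MonV n k, IsDeg r (g i) mi ∧
        r.le (m i + mi.1, mi.2) mf ∧ ((m i + mi.1, mi.2) : MonV n k) ≠ mf

/-- `h` is an `S`-polynomial vector of the ordered pair `(f, g)` w.r.t. the
Euclidean grading `δ`. -/
def IsSPolyPair {W : Type*} [LinearOrder W] (δ : R → W) (r : AdmissibleOrder n k)
    (f g h : PolyVec R n k) : Prop :=
  ∃ mf mg : MonV n k, IsDeg r f mf ∧ IsDeg r g mg ∧
    ((mf.2 ≠ mg.2 ∧ h = 0) ∨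
     (mf.2 = mg.2 ∧ δ ((g mg.2).coeff mg.1) ≤ δ ((f mf.2).coeff mf.1) ∧
       ∃ q : R,
         δ ((f mf.2).coeff mf.1 - q * (g mg.2).coeff mg.1) < δ ((f mf.2).coeff mf.1) ∧
         h = termSMul ((mf.1 ⊔ mg.1) - mg.1) 1 f - termSMul ((mf.1 ⊔ mg.1) - mf.1) q g))

/-- `h` is an `S`-polynomial vector of the (unordered) set `{f, g}`. -/
def IsSPolySet {W : Type*} [LinearOrder W] (δ : R → W) (r : AdmissibleOrder n k)
    (f g h : PolyVec R n k) : Prop :=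
  IsSPolyPair δ r f g h ∨ IsSPolyPair δ r g f h

private lemma AdmOrder.finset_max (r : AdmissibleOrder n k) (T : Finset (MonV n k))
    (hT : T.Nonempty) : ∃ m ∈ T, ∀ m' ∈ T, r.le m' m := by
  classical
  induction T using Finset.induction_on with
  | empty => exact absurd hT (by simp)
  | insert a T' ha ih =>
    rcases T'.eq_empty_or_nonempty with h | h
    · subst h
      exact ⟨a, Finset.mem_insert_self a ∅, by
        intro m' hm'
        rcases Finset.mem_insert.mp hm' with h1 | h1
        · subst h1; exact r.refl m'
        · simp at h1⟩
    · obtain ⟨m, hm, hmax⟩ := ih h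
      rcases r.total a m with h1 | h1
      · refine ⟨m, Finset.mem_insert_of_mem hm, ?_⟩
        intro m' hm'
        rcases Finset.mem_insert.mp hm' with h2 | h2
        · subst h2; exact h1
        · exact hmax m' h2
      · refine ⟨a, Finset.mem_insert_self a T', ?_⟩
        intro m' hm'
        rcases Finset.mem_insert.mp hm' with h2 | h2
        · subst h2; exact r.refl m'
        · exact r.trans _ _ _ (hmax m' h2) h1

private lemma IsDeg.ne_zero' {r : AdmissibleOrder n k} {f : PolyVec R n k} {m : MonV n k}
    (h : IsDeg r f m) : f ≠ 0 := by
  intro h0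
  exact h.1 (by simp [h0])

private lemma exists_isDeg (r : AdmissibleOrder n k) (f : PolyVec R n k) (hf : f ≠ 0) :
    ∃ m, IsDeg r f m := by
  classical
  set T : Finset (MonV n k) :=
    Finset.univ.biUnion (fun i => ((f i).support).image (fun α => ((α, i) : MonV n k))) with hT
  have hmem : ∀ m : MonV n k, m ∈ T ↔ (f m.2).coeff m.1 ≠ 0 := by
    intro m
    simp only [hT, Finset.mem_biUnion, Finset.mem_univ, true_and, Finset.mem_image,
      MvPolynomial.mem_support_iff]
    constructor
    · rintro ⟨i, α, hα, rfl⟩; exact hα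
    · intro h; exact ⟨m.2, m.1, h, rfl⟩
  have hne : T.Nonempty := by
    obtain ⟨i, hi⟩ := Function.ne_iff.mp hf
    obtain ⟨α, hα⟩ := MvPolynomial.ne_zero_iff.mp hi
    exact ⟨(α, i), (hmem _).mpr hα⟩
  obtain ⟨m, hm, hmax⟩ := AdmOrder.finset_max r T hne
  exact ⟨m, (hmem m).mp hm, fun m' hm' => hmax m' ((hmem m').mpr hm')⟩

private lemma isDeg_shift {r : AdmissibleOrder n k} {f : PolyVec R n k} {m : MonV n k}
    (h : IsDeg r f m) (γ : Fin n →₀ ℕ) :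
    IsDeg r (termSMul γ (1 : R) f) (γ + m.1, m.2) ∧
      ((termSMul γ (1 : R) f) m.2).coeff (γ + m.1) = (f m.2).coeff m.1 := by
  classical
  have hco : ∀ (j : Fin k) (μ : Fin n →₀ ℕ),
      ((termSMul γ (1 : R) f) j).coeff μ = if γ ≤ μ then (f j).coeff (μ - γ) else 0 := by
    intro j μ
    simp [termSMul, MvPolynomial.coeff_monomial_mul']
  refine ⟨⟨?_, ?_⟩, ?_⟩
  · rw [hco, if_pos le_self_add, add_tsub_cancel_left]
    exact h.1
  · intro m' hm'
    rw [hco] at hm'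
    by_cases hle : γ ≤ m'.1
    · rw [if_pos hle] at hm'
      have h1 := h.2 (m'.1 - γ, m'.2) hm'
      have h2 := r.add_le _ _ γ _ _ h1
      rw [tsub_add_cancel_of_le hle, add_comm m.1 γ] at h2
      exact h2
    · rw [if_neg hle] at hm'; exact absurd rfl hm'
  · rw [hco, if_pos le_self_add, add_tsub_cancel_left]

private lemma termSMul_eq_smul (γ : Fin n →₀ ℕ) (a : R) (g : PolyVec R n k) :
    termSMul γ a g = (MvPolynomial.monomial γ a) • g := by
  funext j
  simp [termSMul, smul_eq_mul]

private lemma exists_finite_basis {α : Type*} (S : Set α) (ρ : α → α → Prop)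
    (hseq : ∀ s : ℕ → α, (∀ j, s j ∈ S) → ∃ p q, p < q ∧ ρ (s p) (s q)) :
    ∃ D : Finset α, ↑D ⊆ S ∧ ∀ a ∈ S, ∃ d ∈ D, ρ d a := by
  classical
  by_contra hcon
  push_neg at hcon
  have hpick : ∀ l : List α, ∃ a, a ∈ S ∧ ∀ d ∈ l, d ∈ S → ¬ ρ d a := by
    intro l
    obtain ⟨a, haS, ha⟩ := hcon (l.toFinset.filter (· ∈ S))
      (by intro d hd; simp at hd; exact hd.2)
    exact ⟨a, haS, fun d hdl hdS => ha d (by simp [hdl, hdS])⟩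
  choose pick hpickS hpickN using hpick
  let L : ℕ → List α := fun nn => Nat.rec [] (fun _ l => pick l :: l) nn
  have hLs : ∀ m, L (m + 1) = pick (L m) :: L m := fun _ => rfl
  have hmemL : ∀ p q, p < q → pick (L p) ∈ L q := by
    intro p q hpq
    induction q with
    | zero => omega
    | succ t ih =>
      rw [hLs, List.mem_cons]
      rcases Nat.lt_succ_iff_lt_or_eq.mp hpq with h1 | h1
      · exact Or.inr (ih h1)
      · exact Or.inl (by rw [h1])
  obtain ⟨p, q, hpq, hρ⟩ := hseq (fun m => pick (L m)) (fun j => hpickS (L j))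
  exact hpickN (L q) (pick (L p)) (hmemL p q hpq) (hpickS (L p)) hρ

/-- Every submodule of `R[x₁,…,x_n]^k` over a Euclidean domain `R`
(with grading `δ` into a well ordered set `W`) has a finite strong Gröbner basis with
respect to any admissible order on the monomial vectors. -/
theorem exists_finite_strong_groebner_basis
    {R : Type*} [CommRing R] [IsDomain R] {n k : ℕ}
    {W : Type*} [LinearOrder W] [WellFoundedLT W]
    (δ : R → W)
    (hzero : ∀ a : R, δ 0 ≤ δ a)
    (hmul : ∀ a b : R, a ≠ 0 → δ b ≤ δ (a * b))
    (hdiv : ∀ a b : R, a ≠ 0 → ∃ q s : R, b = q * a + s ∧ δ s < δ a)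
    (r : AdmissibleOrder n k)
    (I : Submodule (MvPolynomial (Fin n) R) (PolyVec R n k)) :
    ∃ G : Finset (PolyVec R n k), IsSGB r (↑G) I := by
    classical
  set S : Set (MonV n k) := {m | ∃ f, f ∈ I ∧ IsDeg r f m} with hSdef
  have hFex : ∀ m ∈ S, ∃ f, f ∈ I ∧ IsDeg r f m ∧
      ∀ f', f' ∈ I → IsDeg r f' m → δ ((f m.2).coeff m.1) ≤ δ ((f' m.2).coeff m.1) := by
    intro m hm
    obtain ⟨f0, hf0I, hf0d⟩ := hm
    have hTne : {w : W | ∃ f, f ∈ I ∧ IsDeg r f m ∧ δ ((f m.2).coeff m.1) = w}.Nonempty :=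
      ⟨_, f0, hf0I, hf0d, rfl⟩
    obtain ⟨w, ⟨f, hfI, hfd, hfw⟩, hwmin⟩ := wellFounded_lt.has_min _ hTne
    refine ⟨f, hfI, hfd, fun f' hf'I hf'd => ?_⟩
    rw [hfw]
    exact not_lt.mp (hwmin _ ⟨f', hf'I, hf'd, rfl⟩)
  choose! F hFI hFdeg hFmin using hFex
  set c : MonV n k → R := fun m => ((F m) m.2).coeff m.1 with hc
  have hcne : ∀ m ∈ S, c m ≠ 0 := fun m hm => (hFdeg m hm).1
  -- the minimal leading coefficient divides every leading coefficient at the same monomial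
  have hdvdall : ∀ m ∈ S, ∀ f, f ∈ I → IsDeg r f m → c m ∣ (f m.2).coeff m.1 := by
    intro m hm f hfI hfd
    obtain ⟨q, s, hqs, hs⟩ := hdiv (c m) ((f m.2).coeff m.1) (hcne m hm)
    by_cases hs0 : s = 0
    · exact ⟨q, by rw [hqs, hs0, add_zero, mul_comm]⟩
    · exfalso
      set g : PolyVec R n k := f - ((MvPolynomial.C q : MvPolynomial (Fin n) R)) • (F m) with hg
      have hgI : g ∈ I := Submodule.sub_mem I hfI (Submodule.smul_mem I _ (hFI m hm))
      have hgco : ∀ m' : MonV n k, (g m'.2).coeff m'.1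
          = (f m'.2).coeff m'.1 - q * ((F m) m'.2).coeff m'.1 := by
        intro m'
        simp [hg, MvPolynomial.coeff_sub, MvPolynomial.coeff_C_mul]
      have hgs : (g m.2).coeff m.1 = s := by
        rw [hgco, hqs]
        simp only [hc]
        ring
      have hgdeg : IsDeg r g m := by
        constructor
        · rw [hgs]; exact hs0
        · intro m' hm'
          rw [hgco] at hm'
          by_cases h1 : (f m'.2).coeff m'.1 ≠ 0
          · exact hfd.2 m' h1
          · push_neg at h1
            apply (hFdeg m hm).2 m'
            intro h2
            rw [h1, h2, mul_zero, sub_zero] at hm'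
            exact hm' rfl
      have hmin := hFmin m hm g hgI hgdeg
      rw [hgs] at hmin
      exact absurd hs (not_lt.mpr hmin)
  -- shifting a monomial up stays in S and coarsens the minimal coefficient
  have hshift : ∀ m ∈ S, ∀ γ : Fin n →₀ ℕ, ((γ + m.1, m.2) : MonV n k) ∈ S ∧
      c (γ + m.1, m.2) ∣ c m := by
    intro m hm γ
    obtain ⟨hdeg, hco⟩ := isDeg_shift (hFdeg m hm) γ
    have hmemI : termSMul γ (1 : R) (F m) ∈ I := by
      rw [termSMul_eq_smul]; exact Submodule.smul_mem I _ (hFI m hm)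
    have hmS : ((γ + m.1, m.2) : MonV n k) ∈ S := ⟨_, hmemI, hdeg⟩
    refine ⟨hmS, ?_⟩
    have hd := hdvdall _ hmS _ hmemI hdeg
    rwa [hco] at hd
  have hδdvd : ∀ a b : R, a ∣ b → b ≠ 0 → δ a ≤ δ b := by
    rintro a b ⟨u, rfl⟩ hb
    have hu : u ≠ 0 := fun h => hb (by rw [h, mul_zero])
    calc δ a ≤ δ (u * a) := hmul u a hu
    _ = δ (a * u) := by rw [mul_comm]
  have hmut : ∀ a b : R, a ∣ b → b ≠ 0 → δ b ≤ δ a → b ∣ a := by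
    rintro a b hab hb hba
    obtain ⟨u, rfl⟩ := hab
    obtain ⟨t, s, hts, hs⟩ := hdiv (a * u) a hb
    have hsa : s = a * (1 - t * u) := by linear_combination -hts
    by_cases h1 : 1 - t * u = 0
    · refine ⟨t, ?_⟩
      have h2 : (1 : R) = t * u := sub_eq_zero.mp h1
      calc a = a * 1 := (mul_one a).symm
      _ = a * (t * u) := by rw [← h2]
      _ = a * u * t := by ring
    · exfalso
      have h3 : δ a ≤ δ s := by
        rw [hsa, mul_comm]; exact hmul _ a h1
      exact absurd (lt_of_lt_of_le hs hba) (not_lt.mpr h3)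
  set ρ : MonV n k → MonV n k → Prop :=
    fun a b => a.2 = b.2 ∧ a.1 ≤ b.1 ∧ c a ∣ c b with hρ
  have hseq : ∀ s : ℕ → MonV n k, (∀ j, s j ∈ S) → ∃ p q, p < q ∧ ρ (s p) (s q) := by
    intro s hs
    have hPWO : (Set.univ : Set ((Fin n →₀ ℕ) × Fin k)).IsPWO := by
      have h0 := (Set.isPWO_of_wellQuasiOrderedLE (Set.univ : Set (Fin n →₀ ℕ))).prod
        (Set.isPWO_of_finite (s := (Set.univ : Set (Fin k))))
      rwa [Set.univ_prod_univ] at h0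
    obtain ⟨φ, hφ⟩ := hPWO.exists_monotone_subseq (f := s) (fun _ => Set.mem_univ _)
    have hmono2 : Monotone (fun j => (s (φ j)).2) := fun p q h => (hφ h).2
    obtain ⟨N, -, hNmax⟩ := Set.Finite.exists_maximalFor' (fun j => (s (φ j)).2)
      Set.univ (Set.toFinite _) ⟨0, trivial⟩
    have hconst : ∀ j, N ≤ j → (s (φ j)).2 = (s (φ N)).2 := fun j hj =>
      le_antisymm (hNmax trivial (hmono2 hj)) (hmono2 hj)
    set t : ℕ → MonV n k := fun j => s (φ (N + j)) with ht
    have htS : ∀ j, t j ∈ S := fun j => hs _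
    have ht2 : ∀ p q, (t p).2 = (t q).2 := by
      intro p q
      show (s (φ (N + p))).2 = (s (φ (N + q))).2
      rw [hconst (N + p) (Nat.le_add_right _ _), hconst (N + q) (Nat.le_add_right _ _)]
    have ht1 : ∀ p q, p ≤ q → (t p).1 ≤ (t q).1 := fun p q h =>
      (hφ (show N + p ≤ N + q by omega)).1
    have hchain : ∀ p q, p ≤ q → c (t q) ∣ c (t p) := by
      intro p q h
      obtain ⟨hmS, hdvd⟩ := hshift (t p) (htS p) ((t q).1 - (t p).1)
      have he : ((((t q).1 - (t p).1) + (t p).1, (t p).2) : MonV n k) = t q := by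
        have h1 : ((t q).1 - (t p).1) + (t p).1 = (t q).1 := tsub_add_cancel_of_le (ht1 p q h)
        have h2 := ht2 p q
        rw [Prod.ext_iff]
        exact ⟨h1, h2⟩
      rwa [he] at hdvd
    obtain ⟨w, ⟨p, hp⟩, hwmin⟩ :=
      wellFounded_lt.has_min (Set.range (fun j => δ (c (t j)))) ⟨_, 0, rfl⟩
    have hp' : δ (c (t p)) = w := hp
    have hle1 : δ (c (t (p + 1))) ≤ δ (c (t p)) :=
      hδdvd _ _ (hchain p (p + 1) (by omega)) (hcne _ (htS p))
    have hge : δ (c (t p)) ≤ δ (c (t (p + 1))) := by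
      rw [hp']
      exact not_lt.mp (hwmin _ ⟨p + 1, rfl⟩)
    have hdvd2 : c (t p) ∣ c (t (p + 1)) :=
      hmut _ _ (hchain p (p + 1) (by omega)) (hcne _ (htS p)) hge
    exact ⟨φ (N + p), φ (N + (p + 1)), φ.strictMono (by omega),
      ht2 p (p + 1), ht1 p (p + 1) (by omega), hdvd2⟩
  obtain ⟨D, hDS, hDbasis⟩ := exists_finite_basis S ρ hseq
  refine ⟨D.image F, ?_, ?_⟩
  · intro g hg
    obtain ⟨d, hdD, rfl⟩ := Finset.mem_image.mp hg
    have hdS := hDS hdD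
    exact ⟨hFI d hdS, IsDeg.ne_zero' (hFdeg d hdS)⟩
  · intro f hfI hf0
    obtain ⟨mf, hmf⟩ := exists_isDeg r f hf0
    have hmfS : mf ∈ S := ⟨f, hfI, hmf⟩
    obtain ⟨d, hdD, hρd⟩ := hDbasis mf hmfS
    refine ⟨F d, Finset.mem_image_of_mem F hdD, d, mf, hFdeg d (hDS hdD), hmf, hρd.1,
      fun mm => hρd.2.1 mm, dvd_trans hρd.2.2 (hdvdall mf hmfS f hfI hmf)⟩
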